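/- Let J be a finite nonempty set, let r : ℕ → ℝ with (1/n) ∑_{u=1}^n r u → r̄ as n → ∞, let S : ℕ → J be a label sequence such that for every j ∈ J the empirical frequency (1/n) · #{u ∈ {1,…,n} : S u = j} converges to p j, and let G : ℕ → ℝ be bounded and such that for every j with p j > 0 the conditional averages (1/#{u ≤ n : S u = j}) ∑_{u ≤ n, S u = j} G u converge to V j. Then (1/n) ∑_{u=1}^n ( r u + G u ) → r̄ + ∑_{j ∈ J, p j > 0} p j · V j as n → ∞. -/

import Mathlib

open Finset Filter

theorem optimal_action_value_pathwise_convergence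
    {J : Type*} [Fintype J] [Nonempty J] [DecidableEq J]
    (r : ℕ → ℝ) (rbar : ℝ)
    (hr : Tendsto (fun n : ℕ => (1 / (n : ℝ)) * ∑ u ∈ Finset.Icc 1 n, r u) atTop (nhds rbar))
    (S : ℕ → J) (p : J → ℝ)
    (hfreq : ∀ j : J,
      Tendsto (fun n : ℕ =>
          (1 / (n : ℝ)) * (((Finset.Icc 1 n).filter (fun u => S u = j)).card : ℝ))
        atTop (nhds (p j)))
    (G : ℕ → ℝ) (B : ℝ) (hG_bdd : ∀ u, |G u| ≤ B)
    (V : J → ℝ)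
    (hcond : ∀ j : J, 0 < p j →
      Tendsto (fun n : ℕ =>
          (1 / ((((Finset.Icc 1 n).filter (fun u => S u = j)).card : ℝ))) *
            ∑ u ∈ (Finset.Icc 1 n).filter (fun u => S u = j), G u)
        atTop (nhds (V j))) :
    Tendsto (fun n : ℕ => (1 / (n : ℝ)) * ∑ u ∈ Finset.Icc 1 n, (r u + G u)) atTop
      (nhds (rbar + ∑ j ∈ Finset.univ.filter (fun j => 0 < p j), p j * V j)) := by
  -- per-fiber limit
  have key : ∀ j : J, Tendsto (fun n : ℕ =>
      (1 / (n : ℝ)) * ∑ u ∈ (Finset.Icc 1 n).filter (fun u => S u = j), G u) atTop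
      (nhds (if 0 < p j then p j * V j else 0)) := by
    intro j
    by_cases hp : 0 < p j
    · simp only [if_pos hp]
      have heq : ∀ n : ℕ,
          (1 / (n : ℝ)) * ∑ u ∈ (Finset.Icc 1 n).filter (fun u => S u = j), G u
          = ((1 / (n : ℝ)) * (((Finset.Icc 1 n).filter (fun u => S u = j)).card : ℝ)) *
            ((1 / ((((Finset.Icc 1 n).filter (fun u => S u = j)).card : ℝ))) *
              ∑ u ∈ (Finset.Icc 1 n).filter (fun u => S u = j), G u) := by
        intro n
        by_cases hc : ((Finset.Icc 1 n).filter (fun u => S u = j)).card = 0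
        · rw [Finset.card_eq_zero] at hc
          simp [hc]
        · have hc' : (((Finset.Icc 1 n).filter (fun u => S u = j)).card : ℝ) ≠ 0 := by
            exact_mod_cast hc
          field_simp
        -- end
      simp only [heq]
      have := ((hfreq j).mul (hcond j hp))
      exact this
    · have hpge : 0 ≤ p j := by
        refine ge_of_tendsto' (hfreq j) (fun n => ?_)
        positivity
      have hp0 : p j = 0 := le_antisymm (not_lt.mp hp) hpge
      simp only [if_neg hp]
      have hB : 0 ≤ B := le_trans (abs_nonneg _) (hG_bdd 0)
      have hbound : ∀ n : ℕ,
          ‖(1 / (n : ℝ)) * ∑ u ∈ (Finset.Icc 1 n).filter (fun u => S u = j), G u‖ ≤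
          ((1 / (n : ℝ)) * (((Finset.Icc 1 n).filter (fun u => S u = j)).card : ℝ)) * B := by
        intro n
        rw [norm_mul, mul_assoc]
        have h1 : ‖(1 / (n : ℝ))‖ = 1 / (n : ℝ) := by
          rw [Real.norm_eq_abs, abs_of_nonneg]; positivity
        rw [h1]
        refine mul_le_mul_of_nonneg_left ?_ (by positivity)
        calc ‖∑ u ∈ (Finset.Icc 1 n).filter (fun u => S u = j), G u‖
            ≤ ∑ u ∈ (Finset.Icc 1 n).filter (fun u => S u = j), ‖G u‖ :=
              norm_sum_le _ _
          _ ≤ ∑ u ∈ (Finset.Icc 1 n).filter (fun u => S u = j), B := by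
              refine Finset.sum_le_sum fun u _ => ?_
              simpa [Real.norm_eq_abs] using hG_bdd u
          _ = (((Finset.Icc 1 n).filter (fun u => S u = j)).card : ℝ) * B := by
              rw [Finset.sum_const, nsmul_eq_mul]
      have hlim : Tendsto (fun n : ℕ =>
          ((1 / (n : ℝ)) * (((Finset.Icc 1 n).filter (fun u => S u = j)).card : ℝ)) * B)
          atTop (nhds 0) := by
        have := (hfreq j).mul_const B
        rwa [hp0, zero_mul] at this
      exact squeeze_zero_norm hbound hlim
  have hsum : Tendsto (fun n : ℕ =>
      ∑ j : J, (1 / (n : ℝ)) * ∑ u ∈ (Finset.Icc 1 n).filter (fun u => S u = j), G u)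
      atTop (nhds (∑ j : J, if 0 < p j then p j * V j else 0)) :=
    tendsto_finset_sum _ fun j _ => key j
  have hrhs : (∑ j : J, if 0 < p j then p j * V j else 0)
      = ∑ j ∈ Finset.univ.filter (fun j => 0 < p j), p j * V j := by
    rw [Finset.sum_filter]
  rw [hrhs] at hsum
  have := hr.add hsum
  refine this.congr fun n => ?_
  rw [Finset.sum_add_distrib, mul_add]
  congr 1
  rw [← Finset.mul_sum]
  congr 1
  exact (Finset.sum_fiberwise (Finset.Icc 1 n) S G)
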